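/- For any two vertices i and j of the infinite distance graph D(1,t) with t ≥ 2 and j ≥ i, the graph distance satisfies d(i,j) ≤ (j - i + (t+1)(t-1)/2) / t, i.e., t·d(i,j) ≤ j - i + ⌈t/2⌉·(t-1). -/

import Mathlib

/-- The infinite distance graph on `ℤ` with distance set `D`: distinct integers
`i, j` are adjacent iff `|i - j| ∈ D`. -/
def distGraph (D : Set ℤ) : SimpleGraph ℤ where
  Adj i j := i ≠ j ∧ |i - j| ∈ D
  symm := by
    constructor
    intro i j h
    exact ⟨h.1.symm, by rw [abs_sub_comm]; exact h.2⟩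
  loopless := by
    constructor
    intro i h
    exact h.1 rfl

lemma distGraph_adj_of_abs {D : Set ℤ} {x y : ℤ} (hne : x ≠ y) (h : |x - y| ∈ D) :
    (distGraph D).Adj x y := ⟨hne, h⟩

/-- Walks using only ±1 steps. -/
lemma distGraph_ones_walk (t : ℤ) :
    ∀ b : ℕ, ∀ x y : ℤ, |y - x| ≤ b →
      ∃ p : (distGraph {1, t}).Walk x y, p.length ≤ b := by
  intro b
  induction b with
  | zero =>
    intro x y h
    have hxy : x = y := by
      have h0 : |y - x| = 0 := le_antisymm (by exact_mod_cast h) (abs_nonneg _)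
      have := abs_eq_zero.mp h0
      omega
    subst hxy
    exact ⟨SimpleGraph.Walk.nil, by simp⟩
  | succ b ih =>
    intro x y h
    by_cases hxy : x = y
    · subst hxy; exact ⟨SimpleGraph.Walk.nil, by simp⟩
    · set x' : ℤ := if x < y then x + 1 else x - 1 with hx'
      have habs : |y - x'| ≤ (b : ℤ) := by
        rcases abs_le.mp h with ⟨h1, h2⟩
        rw [abs_le]
        rcases lt_or_gt_of_ne hxy with hlt | hgt
        · rw [hx', if_pos hlt]; push_cast at *; omega
        · rw [hx', if_neg (not_lt.mpr hgt.le)]; push_cast at *; omega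
      have hadj : (distGraph {1, t}).Adj x x' := by
        apply distGraph_adj_of_abs
        · rcases lt_or_gt_of_ne hxy with hlt | hgt
          · rw [hx', if_pos hlt]; omega
          · rw [hx', if_neg (not_lt.mpr hgt.le)]; omega
        · have : |x - x'| = 1 := by
            rcases lt_or_gt_of_ne hxy with hlt | hgt
            · rw [hx', if_pos hlt]; simp
            · rw [hx', if_neg (not_lt.mpr hgt.le)]; simp [abs_of_nonneg]
          rw [this]; left; rfl
      obtain ⟨p, hp⟩ := ih x' y habs
      exact ⟨SimpleGraph.Walk.cons hadj p, by simp; omega⟩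

/-- Walks using only +t steps. -/
lemma distGraph_ts_walk (t : ℤ) (ht : 2 ≤ t) :
    ∀ a : ℕ, ∀ x : ℤ, ∃ p : (distGraph {1, t}).Walk x (x + a * t), p.length = a := by
  intro a
  induction a with
  | zero => intro x; exact ⟨SimpleGraph.Walk.nil.copy rfl (by simp), by simp⟩
  | succ a ih =>
    intro x
    obtain ⟨p, hp⟩ := ih (x + t)
    have hadj : (distGraph {1, t}).Adj x (x + t) := by
      apply distGraph_adj_of_abs
      · omega
      · have : |x - (x + t)| = t := by
          have : x - (x + t) = -t := by ring
          rw [this, abs_neg, abs_of_nonneg (by omega)]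
        rw [this]; right; rfl
    refine ⟨(SimpleGraph.Walk.cons hadj p).copy rfl (by push_cast; ring), by simp [hp]⟩

lemma distGraph_dist_le (t : ℤ) (ht : 2 ≤ t) (a b : ℕ) (x y : ℤ)
    (h : |y - (x + a * t)| ≤ b) :
    (distGraph {1, t}).dist x y ≤ a + b := by
  obtain ⟨p, hp⟩ := distGraph_ts_walk t ht a x
  obtain ⟨q, hq⟩ := distGraph_ones_walk t b (x + a * t) y h
  calc (distGraph {1, t}).dist x y ≤ (p.append q).length := SimpleGraph.dist_le _
    _ = p.length + q.length := SimpleGraph.Walk.length_append _ _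
    _ ≤ a + b := by omega

/-- In `D(1,t)` with `t ≥ 2` and `j ≥ i`, we have `t·d(i,j) ≤ j - i + ⌈t/2⌉·(t - 1)`. -/
theorem distGraph_one_t_dist_le (t : ℤ) (ht : 2 ≤ t) (i j : ℤ) (hij : i ≤ j) :
    t * ((distGraph {1, t}).dist i j : ℤ) ≤ j - i + ⌈(t : ℚ) / 2⌉ * (t - 1) := by
  set c : ℤ := ⌈(t : ℚ) / 2⌉ with hc
  have hc1 : t ≤ 2 * c := by
    have := Int.le_ceil ((t : ℚ) / 2)
    rw [← hc] at this
    have : (t : ℚ) ≤ 2 * c := by linarith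
    exact_mod_cast this
  have hc2 : 2 * c ≤ t + 1 := by
    have := Int.ceil_lt_add_one ((t : ℚ) / 2)
    rw [← hc] at this
    have h2 : (2 * c : ℚ) < t + 2 := by linarith
    have : (2 * c : ℤ) < t + 2 := by exact_mod_cast h2
    omega
  set q : ℤ := (j - i) / t with hq
  set r : ℤ := (j - i) % t with hr
  have ht0 : 0 < t := by omega
  have hr0 : 0 ≤ r := Int.emod_nonneg _ (by omega)
  have hrt : r < t := Int.emod_lt_of_pos _ ht0
  have hq0 : 0 ≤ q := Int.ediv_nonneg (by omega) (by omega)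
  have hn : j - i = q * t + r := by rw [hq, hr, mul_comm]; exact (Int.mul_ediv_add_emod _ _).symm
  by_cases hcase : r ≤ c
  · -- undershoot: a = q, b = r
    have hd := distGraph_dist_le t ht q.toNat r.toNat i j
      (by rw [abs_le]; push_cast [Int.toNat_of_nonneg hq0, Int.toNat_of_nonneg hr0]; omega)
    have hd' : ((distGraph {1, t}).dist i j : ℤ) ≤ q + r := by
      have := Int.toNat_of_nonneg hq0
      have := Int.toNat_of_nonneg hr0
      push_cast at hd ⊢
      omega
    nlinarith [mul_le_mul_of_nonneg_right hd' (by omega : (0:ℤ) ≤ t)]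
  · -- overshoot: a = q + 1, b = t - r
    have hd := distGraph_dist_le t ht (q + 1).toNat (t - r).toNat i j
      (by rw [abs_le]
          push_cast [Int.toNat_of_nonneg (by omega : (0:ℤ) ≤ q + 1),
            Int.toNat_of_nonneg (by omega : (0:ℤ) ≤ t - r)]
          constructor <;> nlinarith)
    have hd' : ((distGraph {1, t}).dist i j : ℤ) ≤ (q + 1) + (t - r) := by
      have := Int.toNat_of_nonneg (by omega : (0:ℤ) ≤ q + 1)
      have := Int.toNat_of_nonneg (by omega : (0:ℤ) ≤ t - r)
      push_cast at hd ⊢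
      omega
    have hkey : (t - r) * (t + 1) ≤ c * (t - 1) := by
      have h1 : t - r ≤ t - c - 1 := by omega
      have h2 : (t - r) * (t + 1) ≤ (t - c - 1) * (t + 1) :=
        mul_le_mul_of_nonneg_right h1 (by omega)
      nlinarith
    nlinarith [mul_le_mul_of_nonneg_right hd' (by omega : (0:ℤ) ≤ t)]
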